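/- Let φ = f (the Killing lift) and τ = p + t for a surface in hyperbolic space inside ℝ^{4,2}, and for μ ∈ ℝ define σ⁺ := τ + φ and σ⁻ := ((μ+1)/2)τ + ((μ-1)/2)φ. Then in curvature line coordinates (u,v), using Rodrigues' equations t_u = -k₁f_u, t_v = -k₂f_v, the exterior product satisfies σ⁺_u ∧ σ⁻_v − σ⁺_v ∧ σ⁻_u = ((μ+1)K − 2μH + (μ−1))·(φ_u ∧ φ_v), where K = k₁k₂ and H = (k₁+k₂)/2. Consequently, f is linear Weingarten of Bryant type with parameter μ, i.e., (μ+1)K − 2μH + (μ−1) = 0, if and only if dσ⁺ ∧ dσ⁻ = 0. -/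

import Mathlib

/-- The identification `Λ²V ≅ so(V)`: `(v∧w)(x) = (x,v)w − (w,x)v`. -/
def wedgeMap {V : Type*} [AddCommGroup V] [Module ℝ V]
    (B : V →ₗ[ℝ] V →ₗ[ℝ] ℝ) (v w : V) : V → V :=
  fun x => B x v • w - B w x • v

lemma wedgeMap_smul_smul {V : Type*} [AddCommGroup V] [Module ℝ V]
    (B : V →ₗ[ℝ] V →ₗ[ℝ] ℝ) (a b : ℝ) (v w x : V) :
    wedgeMap B (a • v) (b • w) x = (a * b) • wedgeMap B v w x := by
  simp only [wedgeMap, map_smul, LinearMap.smul_apply, smul_eq_mul, smul_smul]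
  module

lemma wedgeMap_symm {V : Type*} [AddCommGroup V] [Module ℝ V]
    (B : V →ₗ[ℝ] V →ₗ[ℝ] ℝ) (hB : ∀ v w, B v w = B w v) (v w x : V) :
    wedgeMap B w v x = - wedgeMap B v w x := by
  simp [wedgeMap, hB x w, hB v x]

theorem bryant_lw_characterization
    {V : Type*} [NormedAddCommGroup V] [NormedSpace ℝ V]
    (B : V →ₗ[ℝ] V →ₗ[ℝ] ℝ) (hB : ∀ v w, B v w = B w v)
    (p q : V) (hpp : B p p = -1) (hqq : B q q = 1) (hpq : B p q = 0)
    (f t : ℝ × ℝ → V) (hf : Differentiable ℝ f) (ht : Differentiable ℝ t)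
    (hff : ∀ x, B (f x) (f x) = 0) (hfp : ∀ x, B (f x) p = 0)
    (hfq : ∀ x, B (f x) q = -1)
    (htt : ∀ x, B (t x) (t x) = 1) (htp : ∀ x, B (t x) p = 0)
    (htq : ∀ x, B (t x) q = 0) (htf : ∀ x, B (t x) (f x) = 0)
    (k₁ k₂ : ℝ × ℝ → ℝ)
    (hRu : ∀ x, fderiv ℝ t x (1, 0) = -(k₁ x) • fderiv ℝ f x (1, 0))
    (hRv : ∀ x, fderiv ℝ t x (0, 1) = -(k₂ x) • fderiv ℝ f x (0, 1))
    (hperp : ∀ x, B (fderiv ℝ f x (1, 0)) (fderiv ℝ f x (0, 1)) = 0)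
    (H K : ℝ × ℝ → ℝ)
    (hH : ∀ x, H x = (k₁ x + k₂ x) / 2) (hK : ∀ x, K x = k₁ x * k₂ x)
    (μ : ℝ)
    (σp σm : ℝ × ℝ → V)
    (hσp : ∀ x, σp x = (p + t x) + f x)
    (hσm : ∀ x, σm x = ((μ + 1) / 2) • (p + t x) + ((μ - 1) / 2) • f x) :
    (∀ x v,
      wedgeMap B (fderiv ℝ σp x (1, 0)) (fderiv ℝ σm x (0, 1)) v
        - wedgeMap B (fderiv ℝ σp x (0, 1)) (fderiv ℝ σm x (1, 0)) v
      = ((μ + 1) * K x - 2 * μ * H x + (μ - 1))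
          • wedgeMap B (fderiv ℝ f x (1, 0)) (fderiv ℝ f x (0, 1)) v) ∧
    (∀ x, (∃ v, wedgeMap B (fderiv ℝ f x (1, 0)) (fderiv ℝ f x (0, 1)) v ≠ 0) →
      (((μ + 1) * K x - 2 * μ * H x + (μ - 1) = 0) ↔
        (∀ v, wedgeMap B (fderiv ℝ σp x (1, 0)) (fderiv ℝ σm x (0, 1)) v
          - wedgeMap B (fderiv ℝ σp x (0, 1)) (fderiv ℝ σm x (1, 0)) v = 0))) := by
  have hσp' : σp = fun x => p + (t x + f x) := by
    funext x; rw [hσp x]; abel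
  have hσm' : σm = fun x => ((μ + 1) / 2) • p +
      (((μ + 1) / 2) • t x + ((μ - 1) / 2) • f x) := by
    funext x; rw [hσm x, smul_add]; abel
  have hdp : ∀ x w, fderiv ℝ σp x w = fderiv ℝ t x w + fderiv ℝ f x w := by
    intro x w
    rw [hσp', fderiv_const_add, fderiv_fun_add ((ht x).hasFDerivAt.differentiableAt)
      ((hf x).hasFDerivAt.differentiableAt)]
    rfl
  have hdm : ∀ x w, fderiv ℝ σm x w =
      ((μ + 1) / 2) • fderiv ℝ t x w + ((μ - 1) / 2) • fderiv ℝ f x w := by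
    intro x w
    rw [hσm', fderiv_const_add,
      fderiv_fun_add (f := fun y => ((μ + 1) / 2) • t y) (g := fun y => ((μ - 1) / 2) • f y)
        ((ht x).const_smul _) ((hf x).const_smul _),
      fderiv_fun_const_smul (ht x), fderiv_fun_const_smul (hf x)]
    rfl
  have key : ∀ x v,
      wedgeMap B (fderiv ℝ σp x (1, 0)) (fderiv ℝ σm x (0, 1)) v
        - wedgeMap B (fderiv ℝ σp x (0, 1)) (fderiv ℝ σm x (1, 0)) v
      = ((μ + 1) * K x - 2 * μ * H x + (μ - 1))
          • wedgeMap B (fderiv ℝ f x (1, 0)) (fderiv ℝ f x (0, 1)) v := by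
    intro x v
    have e1 : fderiv ℝ σp x (1, 0) = (1 - k₁ x) • fderiv ℝ f x (1, 0) := by
      rw [hdp, hRu]; module
    have e2 : fderiv ℝ σp x (0, 1) = (1 - k₂ x) • fderiv ℝ f x (0, 1) := by
      rw [hdp, hRv]; module
    have e3 : fderiv ℝ σm x (1, 0) =
        ((μ - 1) / 2 - (μ + 1) / 2 * k₁ x) • fderiv ℝ f x (1, 0) := by
      rw [hdm, hRu]; module
    have e4 : fderiv ℝ σm x (0, 1) =
        ((μ - 1) / 2 - (μ + 1) / 2 * k₂ x) • fderiv ℝ f x (0, 1) := by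
      rw [hdm, hRv]; module
    rw [e1, e2, e3, e4, wedgeMap_smul_smul, wedgeMap_smul_smul,
      wedgeMap_symm B hB (fderiv ℝ f x (1, 0)) (fderiv ℝ f x (0, 1)) v,
      hH, hK, smul_neg, sub_neg_eq_add, ← add_smul]
    congr 1
    ring
  refine ⟨key, fun x ⟨v₀, hv₀⟩ => ?_⟩
  constructor
  · intro hc v
    rw [key x v, hc, zero_smul]
  · intro hall
    have := hall v₀
    rw [key x v₀] at this
    rcases smul_eq_zero.mp this with h | h
    · exact h
    · exact absurd h hv₀
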